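/- The Greibach inequalities hold in all μ-continuous Chomsky algebras: for every interpretation σ over a μ-continuous Chomsky algebra and all terms s, r and distinct variables x, y with y not free in s or r, σ(μx.(s·(μy.(1 + r·y)))) ≤ σ(μx.(s + x·r)) and σ(μx.((μy.(1 + y·r))·s)) ≤ σ(μx.(s + r·x)). -/

import Mathlib

/-- μ-expressions over a set `X` of variables:
`t ::= x | t + t | t·t | 0 | 1 | μx.t`. -/
inductive MuTerm (X : Type) : Type
  | var : X → MuTerm X
  | zero : MuTerm X
  | one : MuTerm X
  | add : MuTerm X → MuTerm X → MuTerm X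
  | mul : MuTerm X → MuTerm X → MuTerm X
  | mu : X → MuTerm X → MuTerm X

namespace MuTerm

variable {X : Type}

/-- Size of a term (used for termination of substitution). -/
def size : MuTerm X → ℕ
  | var _ => 1
  | zero => 1
  | one => 1
  | add s t => size s + size t + 1
  | mul s t => size s + size t + 1
  | mu _ t => size t + 1

variable [DecidableEq X]

/-- Free variables of a μ-expression. -/
def fv : MuTerm X → Finset X
  | var x => {x}
  | zero => ∅
  | one => ∅
  | add s t => fv s ∪ fv t
  | mul s t => fv s ∪ fv t
  | mu x t => fv t \ {x}

/-- All (free and bound) variables of a μ-expression. -/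
def vars : MuTerm X → Finset X
  | var x => {x}
  | zero => ∅
  | one => ∅
  | add s t => vars s ∪ vars t
  | mul s t => vars s ∪ vars t
  | mu x t => insert x (vars t)

/-- Rename free occurrences of the variable `y` to `z`. -/
def rename (y z : X) : MuTerm X → MuTerm X
  | var x => if x = y then var z else var x
  | zero => zero
  | one => one
  | add s t => add (rename y z s) (rename y z t)
  | mul s t => mul (rename y z s) (rename y z t)
  | mu x t => if x = y then mu x t else mu x (rename y z t)

theorem size_rename (y z : X) : ∀ t : MuTerm X, (rename y z t).size = t.size
  | var x => by simp only [rename]; split <;> rfl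
  | zero => rfl
  | one => rfl
  | add s t => by simp [rename, size, size_rename y z s, size_rename y z t]
  | mul s t => by simp [rename, size, size_rename y z s, size_rename y z t]
  | mu x t => by
      simp only [rename]; split
      · rfl
      · simp [size, size_rename y z t]

variable [Infinite X]

/-- Capture-avoiding substitution `t[x := u]`: substitute `u` for the free
occurrences of `x` in the last argument, renaming bound variables to fresh
ones to avoid capture. -/
noncomputable def subst (x : X) (u : MuTerm X) : MuTerm X → MuTerm X
  | var y => if y = x then u else var y
  | zero => zero
  | one => one
  | add s t => add (subst x u s) (subst x u t)
  | mul s t => mul (subst x u s) (subst x u t)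
  | mu y t =>
    if y = x then mu y t
    else
      let z : X := Classical.choose (Infinite.exists_notMem_finset (vars t ∪ fv u ∪ {x}))
      mu z (subst x u (rename y z t))
  termination_by t => size t
  decreasing_by
    all_goals simp only [size, size_rename]
    all_goals omega

/-- The `n`-th approximant `nx.t`: `0x.t = 0`, `(n+1)x.t = t[x := nx.t]`. -/
noncomputable def napprox : ℕ → X → MuTerm X → MuTerm X
  | 0, _, _ => zero
  | n + 1, x, t => subst x (napprox n x t) t

end MuTerm

/-- Polynomial functions over a semiring `C` in `n` indeterminates: functions
built from constants in `C`, projections, addition, and multiplication. -/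
inductive IsPolyFun {C : Type} [Semiring C] : {n : ℕ} → ((Fin n → C) → C) → Prop
  | const {n : ℕ} (c : C) : IsPolyFun fun _ : Fin n → C => c
  | proj {n : ℕ} (i : Fin n) : IsPolyFun fun v => v i
  | add {n : ℕ} {p q : (Fin n → C) → C} :
      IsPolyFun p → IsPolyFun q → IsPolyFun fun v => p v + q v
  | mul {n : ℕ} {p q : (Fin n → C) → C} :
      IsPolyFun p → IsPolyFun q → IsPolyFun fun v => p v * q v

/-- A Chomsky algebra is an idempotent semiring (ordered by `a ≤ b ↔ a + b = b`)
in which every finite system of polynomial inequalities `pᵢ ≤ xᵢ` has a least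
solution. -/
class ChomskyAlgebra (C : Type) extends IdemSemiring C where
  algClosed : ∀ {n : ℕ} (p : Fin n → (Fin n → C) → C), (∀ i, IsPolyFun (p i)) →
    ∃ sol : Fin n → C, (∀ i, p i sol ≤ sol i) ∧
      ∀ τ : Fin n → C, (∀ i, p i τ ≤ τ i) → ∀ i, sol i ≤ τ i

/-- `IsInterp eval` says that `eval` is the family of interpretations of
μ-expressions over the Chomsky algebra `C`, one for each valuation `v : X → C`:
each `eval v` is a homomorphism with respect to the semiring operations, and
`eval v (μx.t)` is the least `a` with `eval v[x↦a] t ≤ a`. -/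
structure IsInterp {X C : Type} [DecidableEq X] [Infinite X] [ChomskyAlgebra C]
    (eval : (X → C) → MuTerm X → C) : Prop where
  var : ∀ (v : X → C) (x : X), eval v (.var x) = v x
  zero : ∀ v, eval v .zero = 0
  one : ∀ v, eval v .one = 1
  add : ∀ v s t, eval v (.add s t) = eval v s + eval v t
  mul : ∀ v s t, eval v (.mul s t) = eval v s * eval v t
  mu : ∀ (v : X → C) (x : X) (t : MuTerm X),
    IsLeast {a : C | eval (Function.update v x a) t ≤ a} (eval v (.mu x t))

/-- A Chomsky algebra `C` is μ-continuous if for every interpretation `σ` over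
`C`, all `c, d ∈ C`, and every term `t`,
`c·σ(μx.t)·d = sup_{n ≥ 0} c·σ(nx.t)·d` (in particular the supremum exists). -/
def MuContinuous (C : Type) [ChomskyAlgebra C] : Prop :=
  ∀ (X : Type) [DecidableEq X] [Infinite X] (eval : (X → C) → MuTerm X → C),
    IsInterp eval → ∀ (v : X → C) (c d : C) (x : X) (t : MuTerm X),
      IsLUB (Set.range fun n : ℕ => c * eval v (MuTerm.napprox n x t) * d)
        (c * eval v (.mu x t) * d)

/-- A language interpretation `τ : T X → P(Y*)`: a homomorphism for the
semiring operations on languages with `τ(μx.t) = ⋃ n, τ(nx.t)`. -/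
structure IsLangInterp {X Y : Type} [DecidableEq X] [Infinite X]
    (τ : MuTerm X → Language Y) : Prop where
  zero : τ .zero = 0
  one : τ .one = 1
  add : ∀ s t, τ (.add s t) = τ s + τ t
  mul : ∀ s t, τ (.mul s t) = τ s * τ t
  mu : ∀ (x : X) (t : MuTerm X), τ (.mu x t) = ⨆ n : ℕ, τ (MuTerm.napprox n x t)

/-- The canonical interpretation `L_X : T X → P(X*)`: the language
interpretation with `L_X(x) = {x}`. -/
def IsCanonicalInterp {X : Type} [DecidableEq X] [Infinite X]
    (L : MuTerm X → Language X) : Prop :=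
  IsLangInterp L ∧ ∀ x : X, L (.var x) = {[x]}

/-- For a word `w = x₁⋯x_k ∈ X*` and `σ : X → K`, `wordProd σ w` is the
product `σ(x₁)⋯σ(x_k)` in `K`, with the empty word mapped to `1`. -/
def wordProd {X K : Type} [Monoid K] (σ : X → K) (w : List X) : K :=
  (w.map σ).prod

/-- `IsLangEval E` says that `E` is the family of structurally induced language
interpretations, one for each assignment `σ : X → P(Y*)` of languages to
variables: each `E σ` is a homomorphism for the semiring operations on
languages, with `E σ (μx.t) = ⋃ n, E σ (nx.t)`. -/
structure IsLangEval {X Y : Type} [DecidableEq X] [Infinite X]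
    (E : (X → Language Y) → MuTerm X → Language Y) : Prop where
  var : ∀ (σ : X → Language Y) (x : X), E σ (.var x) = σ x
  zero : ∀ σ, E σ .zero = 0
  one : ∀ σ, E σ .one = 1
  add : ∀ σ s t, E σ (.add s t) = E σ s + E σ t
  mul : ∀ σ s t, E σ (.mul s t) = E σ s * E σ t
  mu : ∀ (σ : X → Language Y) (x : X) (t : MuTerm X),
    E σ (.mu x t) = ⨆ n : ℕ, E σ (MuTerm.napprox n x t)

section Aux

open MuTerm

theorem MuTerm.fv_subset_vars {X : Type} [DecidableEq X] :
    ∀ t : MuTerm X, t.fv ⊆ t.vars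
  | .var x => by simp [fv, vars]
  | .zero => by simp [fv, vars]
  | .one => by simp [fv, vars]
  | .add s t => by
      simpa only [fv, vars] using
        Finset.union_subset_union (fv_subset_vars s) (fv_subset_vars t)
  | .mul s t => by
      simpa only [fv, vars] using
        Finset.union_subset_union (fv_subset_vars s) (fv_subset_vars t)
  | .mu x t => by
      simp only [fv, vars]
      exact Finset.sdiff_subset.trans ((fv_subset_vars t).trans (Finset.subset_insert _ _))

variable {X C : Type} [DecidableEq X] [Infinite X] [ChomskyAlgebra C]
  {eval : (X → C) → MuTerm X → C}

theorem eval_congr (h : IsInterp eval) :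
    ∀ (t : MuTerm X) (v w : X → C), (∀ z ∈ t.fv, v z = w z) → eval v t = eval w t
  | .var a, v, w, hvw => by rw [h.var, h.var]; exact hvw a (by simp [fv])
  | .zero, v, w, _ => by rw [h.zero, h.zero]
  | .one, v, w, _ => by rw [h.one, h.one]
  | .add p q, v, w, hvw => by
      rw [h.add, h.add, eval_congr h p v w (fun z hz => hvw z (by simp [fv, hz])),
        eval_congr h q v w (fun z hz => hvw z (by simp [fv, hz]))]
  | .mul p q, v, w, hvw => by
      rw [h.mul, h.mul, eval_congr h p v w (fun z hz => hvw z (by simp [fv, hz])),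
        eval_congr h q v w (fun z hz => hvw z (by simp [fv, hz]))]
  | .mu a t, v, w, hvw => by
      have hset : {b : C | eval (Function.update v a b) t ≤ b}
          = {b : C | eval (Function.update w a b) t ≤ b} := by
        ext b
        simp only [Set.mem_setOf_eq]
        rw [eval_congr h t (Function.update v a b) (Function.update w a b)
          (fun z hz => by
            by_cases hza : z = a
            · subst hza; simp
            · simp only [Function.update_of_ne hza]
              exact hvw z (by simp [fv, hz, hza]))]
      exact (h.mu v a t).unique (hset ▸ h.mu w a t)

theorem eval_rename (h : IsInterp eval) :
    ∀ (t : MuTerm X) (y z : X) (v : X → C), z ∉ t.vars →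
      eval v (MuTerm.rename y z t) = eval (Function.update v y (v z)) t
  | .var a, y, z, v, _ => by
      simp only [MuTerm.rename]
      split
      · next hay => subst hay; rw [h.var, h.var, Function.update_self]
      · next hay => rw [h.var, h.var, Function.update_of_ne hay]
  | .zero, y, z, v, _ => by simp only [MuTerm.rename, h.zero]
  | .one, y, z, v, _ => by simp only [MuTerm.rename, h.one]
  | .add p q, y, z, v, hz => by
      simp only [MuTerm.rename, h.add]
      rw [eval_rename h p y z v (fun e => hz (by simp [vars, e])),
        eval_rename h q y z v (fun e => hz (by simp [vars, e]))]
  | .mul p q, y, z, v, hz => by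
      simp only [MuTerm.rename, h.mul]
      rw [eval_rename h p y z v (fun e => hz (by simp [vars, e])),
        eval_rename h q y z v (fun e => hz (by simp [vars, e]))]
  | .mu a t, y, z, v, hz => by
      simp only [MuTerm.rename]
      split
      · next hay =>
          subst hay
          exact eval_congr h (MuTerm.mu a t) v _ (fun w hw => by
            have hwa : w ≠ a := by
              simp only [fv, Finset.mem_sdiff, Finset.mem_singleton] at hw
              exact hw.2
            rw [Function.update_of_ne hwa])
      · next hay =>
          have hza : z ≠ a := fun e => hz (by simp [vars, e])
          have hzt : z ∉ t.vars := fun e => hz (by simp [vars, e])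
          have hset : {b : C | eval (Function.update v a b) (MuTerm.rename y z t) ≤ b}
              = {b : C | eval (Function.update (Function.update v y (v z)) a b) t ≤ b} := by
            ext b
            simp only [Set.mem_setOf_eq]
            rw [eval_rename h t y z (Function.update v a b) hzt,
              Function.update_of_ne hza, Function.update_comm hay]
          exact (h.mu v a _).unique (hset ▸ h.mu (Function.update v y (v z)) a t)

theorem eval_subst (h : IsInterp eval) (x : X) (u : MuTerm X) :
    ∀ (t : MuTerm X) (v : X → C),
      eval v (MuTerm.subst x u t) = eval (Function.update v x (eval v u)) t := by
  suffices H : ∀ (n : ℕ) (t : MuTerm X), t.size ≤ n → ∀ v : X → C,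
      eval v (MuTerm.subst x u t) = eval (Function.update v x (eval v u)) t from
    fun t v => H t.size t le_rfl v
  intro n
  induction n with
  | zero => intro t ht; cases t <;> simp [MuTerm.size] at ht
  | succ n ih =>
    intro t ht v
    match t with
    | .var a =>
        rw [MuTerm.subst]
        split
        · next h1 => subst h1; rw [h.var, Function.update_self]
        · next h1 => rw [h.var, h.var, Function.update_of_ne h1]
    | .zero => rw [MuTerm.subst, h.zero, h.zero]
    | .one => rw [MuTerm.subst, h.one, h.one]
    | .add p q =>
        have hp : p.size ≤ n := by simp only [MuTerm.size] at ht; omega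
        have hq : q.size ≤ n := by simp only [MuTerm.size] at ht; omega
        rw [MuTerm.subst, h.add, h.add, ih p hp v, ih q hq v]
    | .mul p q =>
        have hp : p.size ≤ n := by simp only [MuTerm.size] at ht; omega
        have hq : q.size ≤ n := by simp only [MuTerm.size] at ht; omega
        rw [MuTerm.subst, h.mul, h.mul, ih p hp v, ih q hq v]
    | .mu a t' =>
        rw [MuTerm.subst]
        split
        · next h1 =>
            subst h1
            exact eval_congr h (MuTerm.mu a t') v _ (fun w hw => by
              have hwa : w ≠ a := by
                simp only [fv, Finset.mem_sdiff, Finset.mem_singleton] at hw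
                exact hw.2
              rw [Function.update_of_ne hwa])
        · next h1 =>
            set z : X :=
              Classical.choose (Infinite.exists_notMem_finset (vars t' ∪ fv u ∪ {x}))
              with hzdef
            have hz :=
              Classical.choose_spec (Infinite.exists_notMem_finset (vars t' ∪ fv u ∪ {x}))
            rw [← hzdef] at hz
            simp only [Finset.mem_union, Finset.mem_singleton, not_or] at hz
            obtain ⟨⟨hzt, hzu⟩, hzx⟩ := hz
            have hsz : (MuTerm.rename a z t').size ≤ n := by
              rw [MuTerm.size_rename]; simp only [MuTerm.size] at ht; omega
            have hset : {b : C |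
                  eval (Function.update v z b) (MuTerm.subst x u (MuTerm.rename a z t')) ≤ b}
                = {b : C | eval (Function.update (Function.update v x (eval v u)) a b) t' ≤ b} := by
              ext b
              simp only [Set.mem_setOf_eq]
              rw [ih _ hsz (Function.update v z b)]
              have hu : eval (Function.update v z b) u = eval v u :=
                eval_congr h u _ _
                  (fun w hw => Function.update_of_ne (fun e => hzu (by rw [← e]; exact hw)) _ _)
              rw [hu, eval_rename h t' a z _ hzt, Function.update_of_ne hzx,
                Function.update_self]
              rw [eval_congr h t'
                (Function.update (Function.update (Function.update v z b) x (eval v u)) a b)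
                (Function.update (Function.update v x (eval v u)) a b)
                (fun w hw => by
                  by_cases hwa : w = a
                  · subst hwa; simp
                  · rw [Function.update_of_ne hwa, Function.update_of_ne hwa]
                    by_cases hwx : w = x
                    · subst hwx; simp
                    · rw [Function.update_of_ne hwx, Function.update_of_ne hwx]
                      have hwz : w ≠ z := fun e => hzt (e ▸ MuTerm.fv_subset_vars t' hw)
                      rw [Function.update_of_ne hwz])]
            exact (h.mu v z _).unique (hset ▸ h.mu (Function.update v x (eval v u)) a t')

end Aux

/-- the Greibach inequalities
`μx.(s·(μy.(1 + r·y))) ≤ μx.(s + x·r)` and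
`μx.((μy.(1 + y·r))·s) ≤ μx.(s + r·x)` hold in all μ-continuous Chomsky
algebras, for distinct variables `x, y` with `y` not free in `s` or `r`. -/
theorem statement14 {X C : Type} [DecidableEq X] [Infinite X] [ChomskyAlgebra C]
    (hC : MuContinuous C) (eval : (X → C) → MuTerm X → C) (h : IsInterp eval)
    (v : X → C) (s r : MuTerm X) (x y : X) (hxy : x ≠ y)
    (hys : y ∉ MuTerm.fv s) (hyr : y ∉ MuTerm.fv r) :
    eval v (.mu x (.mul s (.mu y (.add .one (.mul r (.var y)))))) ≤
      eval v (.mu x (.add s (.mul (.var x) r))) ∧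
    eval v (.mu x (.mul (.mu y (.add .one (.mul (.var y) r))) s)) ≤
      eval v (.mu x (.add s (.mul r (.var x)))) := by
  constructor
  · set t₁ : MuTerm X := .add .one (.mul r (.var y)) with ht₁
    set A := eval v (.mu x (.add s (.mul (.var x) r))) with hAdef
    set v' := Function.update v x A with hv'
    have hA : eval v' s + A * eval v' r ≤ A := by
      have := Set.mem_setOf_eq ▸ (h.mu v x (.add s (.mul (.var x) r))).1
      rw [h.add, h.mul, h.var, Function.update_self] at this
      exact this
    have hS : eval v' s ≤ A := le_trans (by rw [add_eq_sup]; exact le_sup_left) hA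
    have hAR : A * eval v' r ≤ A := le_trans (by rw [add_eq_sup]; exact le_sup_right) hA
    have key : ∀ (n : ℕ) (c : C), c ≤ A → c * eval v' (MuTerm.napprox n y t₁) ≤ A := by
      intro n
      induction n with
      | zero => intro c _; rw [MuTerm.napprox, h.zero, mul_zero]; exact zero_le
      | succ n ih =>
        intro c hc
        rw [MuTerm.napprox, eval_subst h y _ t₁, ht₁, h.add, h.mul, h.one, h.var,
          Function.update_self]
        have hr : eval (Function.update v' y (eval v' (MuTerm.napprox n y t₁))) r
            = eval v' r :=
          eval_congr h r _ _
            (fun w hw => Function.update_of_ne (fun e => hyr (by rw [← e]; exact hw)) _ _)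
        rw [hr, mul_add, mul_one, ← mul_assoc]
        exact add_le hc (ih (c * eval v' r) (le_trans (mul_le_mul_left hc _) hAR))
    have hlub := hC X eval h v' (eval v' s) 1 y t₁
    have hle : eval v' s * eval v' (.mu y t₁) * 1 ≤ A := by
      apply hlub.2
      rintro b ⟨n, rfl⟩
      simp only [mul_one]
      exact key n _ hS
    rw [mul_one] at hle
    exact (h.mu v x (.mul s (.mu y t₁))).2
      (show eval v' (.mul s (.mu y t₁)) ≤ A from by rw [h.mul]; exact hle)
  · set t₂ : MuTerm X := .add .one (.mul (.var y) r) with ht₂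
    set A := eval v (.mu x (.add s (.mul r (.var x)))) with hAdef
    set v' := Function.update v x A with hv'
    have hA : eval v' s + eval v' r * A ≤ A := by
      have := Set.mem_setOf_eq ▸ (h.mu v x (.add s (.mul r (.var x)))).1
      rw [h.add, h.mul, h.var, Function.update_self] at this
      exact this
    have hS : eval v' s ≤ A := le_trans (by rw [add_eq_sup]; exact le_sup_left) hA
    have hRA : eval v' r * A ≤ A := le_trans (by rw [add_eq_sup]; exact le_sup_right) hA
    have key : ∀ (n : ℕ) (c : C), c ≤ A → eval v' (MuTerm.napprox n y t₂) * c ≤ A := by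
      intro n
      induction n with
      | zero => intro c _; rw [MuTerm.napprox, h.zero, zero_mul]; exact zero_le
      | succ n ih =>
        intro c hc
        rw [MuTerm.napprox, eval_subst h y _ t₂, ht₂, h.add, h.mul, h.var,
          h.one, Function.update_self]
        have hr : eval (Function.update v' y (eval v' (MuTerm.napprox n y t₂))) r
            = eval v' r :=
          eval_congr h r _ _
            (fun w hw => Function.update_of_ne (fun e => hyr (by rw [← e]; exact hw)) _ _)
        rw [hr, add_mul, one_mul, mul_assoc]
        exact add_le hc (ih (eval v' r * c) (le_trans (mul_le_mul_right hc _) hRA))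
    have hlub := hC X eval h v' 1 (eval v' s) y t₂
    have hle : 1 * eval v' (.mu y t₂) * eval v' s ≤ A := by
      apply hlub.2
      rintro b ⟨n, rfl⟩
      simp only [one_mul]
      exact key n _ hS
    rw [one_mul] at hle
    exact (h.mu v x (.mul (.mu y t₂) s)).2
      (show eval v' (.mul (.mu y t₂) s) ≤ A from by rw [h.mul]; exact hle)
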